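/- Let H be a real Hilbert space, A : H → H a continuous self-adjoint linear operator, α > 0, y_d, y_r, c, λ̃, p̃ ∈ H, and B ⊆ H a nonempty closed convex set. Define the proximal operator D₁ on H × H by D₁(λ, p) = ((1/α)(α A² + I)⁻¹ λ, 0) (which is well defined since α A² + I is boundedly invertible). Define (λ^k, p^k) by the three-step procedure: p̂ is the unique minimizer over H of p ↦ ½‖A p − y_d‖² + (1/(2α))‖p − λ̃ − c‖² + ⟨p, y_r⟩; λ^k is the unique minimizer over B of λ ↦ (1/(2α))‖λ − (p̂ − c)‖²; p^k is the unique minimizer over H of p ↦ ½‖A p − y_d‖² + (1/(2α))‖p − λ^k − c‖² + ⟨p, y_r⟩. Then (λ^k, p^k) is the unique minimizer over B × H of the function (λ, p) ↦ ½‖A p − y_d‖² + ⟨p, y_r⟩ + (1/(2α))‖−p + λ + c‖² + ½⟨(λ − λ̃, p − p̃), D₁(λ − λ̃, p − p̃)⟩. -/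

import Mathlib

open scoped InnerProductSpace

/-- The (non-normed) inner product on the product of two real inner product spaces. -/
noncomputable def prodInner {V W : Type*} [NormedAddCommGroup V] [InnerProductSpace ℝ V]
    [NormedAddCommGroup W] [InnerProductSpace ℝ W] (x y : V × W) : ℝ :=
  ⟪x.1, y.1⟫_ℝ + ⟪x.2, y.2⟫_ℝ


section sGSAux
variable {H : Type*} [NormedAddCommGroup H] [InnerProductSpace ℝ H]

/-- Quadratic expansion of the `p`-subproblem objective (original coefficients). -/
lemma sGS_expand_aux (A : H →L[ℝ] H) (hA : ∀ x y : H, ⟪A x, y⟫_ℝ = ⟪x, A y⟫_ℝ)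
    (α : ℝ) (yd yr w c : H) (m p : H) :
    1 / 2 * ‖A p - yd‖ ^ 2 + 1 / (2 * α) * ‖p - w - c‖ ^ 2 + ⟪p, yr⟫_ℝ
      = 1 / 2 * ‖A m - yd‖ ^ 2 + 1 / (2 * α) * ‖m - w - c‖ ^ 2 + ⟪m, yr⟫_ℝ
        + ⟪p - m, A (A m) - A yd + yr + α⁻¹ • (m - w - c)⟫_ℝ
        + 1 / 2 * ‖A (p - m)‖ ^ 2 + 1 / (2 * α) * ‖p - m‖ ^ 2
        + (1 / (2 * α) * 2 - α⁻¹) * ⟪m - w - c, p - m⟫_ℝ := by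
  have h1 : A p - yd = (A m - yd) + A (p - m) := by rw [map_sub]; abel
  have h2 : p - w - c = (m - w - c) + (p - m) := by abel
  rw [h1, h2, norm_add_sq_real, norm_add_sq_real]
  rw [inner_add_right, inner_add_right, real_inner_smul_right]
  have h3 : ⟪A m - yd, A (p - m)⟫_ℝ = ⟪p - m, A (A m) - A yd⟫_ℝ := by
    rw [real_inner_comm, hA, map_sub]
  have h5 : ⟪p, yr⟫_ℝ = ⟪m, yr⟫_ℝ + ⟪p - m, yr⟫_ℝ := by
    rw [← inner_add_left]; congr 1; abel
  rw [h3, h5, real_inner_comm (m - w - c) (p - m)]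
  ring

/-- Multiplied (denominator-free) quadratic expansion. -/
lemma sGS_expand_mul (A : H →L[ℝ] H) (hA : ∀ x y : H, ⟪A x, y⟫_ℝ = ⟪x, A y⟫_ℝ)
    (α : ℝ) (yd yr w c : H) (m p : H) :
    α * ‖A p - yd‖ ^ 2 + ‖p - w - c‖ ^ 2 + 2 * α * ⟪p, yr⟫_ℝ
      = α * ‖A m - yd‖ ^ 2 + ‖m - w - c‖ ^ 2 + 2 * α * ⟪m, yr⟫_ℝ
        + 2 * ⟪p - m, α • A (A m) - α • A yd + α • yr + (m - w - c)⟫_ℝ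
        + α * ‖A (p - m)‖ ^ 2 + ‖p - m‖ ^ 2 := by
  have h6 : ⟪p - m, α • A (A m) - α • A yd + α • yr + (m - w - c)⟫_ℝ
      = α * ⟪p - m, A (A m) - A yd⟫_ℝ + α * ⟪p - m, yr⟫_ℝ + ⟪p - m, m - w - c⟫_ℝ := by
    simp only [inner_add_right, inner_sub_right, real_inner_smul_right]
    ring
  rw [h6]
  have h1 : A p - yd = (A m - yd) + A (p - m) := by rw [map_sub]; abel
  have h2 : p - w - c = (m - w - c) + (p - m) := by abel
  rw [h1, h2, norm_add_sq_real, norm_add_sq_real]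
  have h3 : ⟪A m - yd, A (p - m)⟫_ℝ = ⟪p - m, A (A m) - A yd⟫_ℝ := by
    rw [real_inner_comm, hA, map_sub]
  have h5 : ⟪p, yr⟫_ℝ = ⟪m, yr⟫_ℝ + ⟪p - m, yr⟫_ℝ := by
    rw [← inner_add_left]; congr 1; abel
  rw [h3, h5, real_inner_comm (m - w - c) (p - m)]
  ring

/-- First-order optimality condition for the `p`-subproblem, in multiplied form. -/
lemma sGS_foc_aux (A : H →L[ℝ] H) (hA : ∀ x y : H, ⟪A x, y⟫_ℝ = ⟪x, A y⟫_ℝ)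
    (α : ℝ) (hα : 0 < α) (yd yr w c : H) (m : H)
    (hm : ∀ p : H,
      1 / 2 * ‖A m - yd‖ ^ 2 + 1 / (2 * α) * ‖m - w - c‖ ^ 2 + ⟪m, yr⟫_ℝ
        ≤ 1 / 2 * ‖A p - yd‖ ^ 2 + 1 / (2 * α) * ‖p - w - c‖ ^ 2 + ⟪p, yr⟫_ℝ) :
    α • A (A m) + m = α • A yd - α • yr + (w + c) := by
  have hcoef : (1 / (2 * α) * 2 - α⁻¹ : ℝ) = 0 := by field_simp; ring
  have hG0 : A (A m) - A yd + yr + α⁻¹ • (m - w - c) = 0 := by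
    set G : H := A (A m) - A yd + yr + α⁻¹ • (m - w - c) with hG
    by_contra hne
    have hGn : 0 < ‖G‖ ^ 2 := pow_pos (norm_pos_iff.mpr hne) 2
    set b : ℝ := 1 / 2 * ‖A G‖ ^ 2 + 1 / (2 * α) * ‖G‖ ^ 2 with hb
    have hbpos : 0 < b := by positivity
    set t : ℝ := ‖G‖ ^ 2 / (2 * b) with ht
    have key := hm (m - t • G)
    rw [sGS_expand_aux A hA α yd yr w c m (m - t • G), hcoef, zero_mul, add_zero] at key
    have e1 : m - t • G - m = (-t) • G := by rw [neg_smul]; abel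
    rw [e1] at key
    rw [real_inner_smul_left, map_smul, norm_smul, norm_smul] at key
    have hAbs : ‖(-t : ℝ)‖ ^ 2 = t ^ 2 := by rw [Real.norm_eq_abs, sq_abs]; ring
    rw [mul_pow, mul_pow, hAbs, real_inner_self_eq_norm_sq] at key
    have htpos : 0 < t := div_pos hGn (by linarith)
    have h2 : 0 ≤ t * (-‖G‖ ^ 2 + t * b) := by
      have hh : t * (-‖G‖ ^ 2 + t * b)
          = -t * ‖G‖ ^ 2 + 1 / 2 * (t ^ 2 * ‖A G‖ ^ 2) + 1 / (2 * α) * (t ^ 2 * ‖G‖ ^ 2) := by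
        rw [hb]; ring
      rw [hh]; linarith [key]
    have h3 : t * b = ‖G‖ ^ 2 / 2 := by
      rw [ht]; field_simp
    nlinarith [h2, h3, htpos, hGn]
  have h2 := congrArg (fun z : H => α • z) hG0
  simp only [smul_add, smul_sub, smul_smul, mul_inv_cancel₀ (ne_of_gt hα), one_smul,
    smul_zero] at h2
  linear_combination (norm := module) h2

/-- Variational inequality for the projection onto a convex set. -/
lemma sGS_vi_aux (B : Set H) (hBconvex : Convex ℝ B) (z lamk : H) (hmem : lamk ∈ B)
    (hmin : ∀ l ∈ B, ‖lamk - z‖ ^ 2 ≤ ‖l - z‖ ^ 2) :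
    ∀ l ∈ B, 0 ≤ ⟪l - lamk, lamk - z⟫_ℝ := by
  intro l hl
  by_contra hneg
  push_neg at hneg
  set d : ℝ := ⟪l - lamk, lamk - z⟫_ℝ with hd
  set n : ℝ := ‖l - lamk‖ ^ 2 with hn
  have hn0 : 0 ≤ n := by positivity
  set t : ℝ := min 1 ((-d) / (n + 1)) with ht
  have htpos : 0 < t := lt_min one_pos (div_pos (by linarith) (by linarith))
  have ht1 : t ≤ 1 := min_le_left _ _
  have htn : t * n < -d := by
    have h1 : t ≤ (-d) / (n + 1) := min_le_right _ _
    have h2 : t * n ≤ ((-d) / (n + 1)) * n := by nlinarith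
    have h3 : ((-d) / (n + 1)) * n < -d := by
      rw [div_mul_eq_mul_div, div_lt_iff₀ (by linarith)]
      nlinarith
    linarith
  have hmem' : lamk + t • (l - lamk) ∈ B := by
    have := hBconvex hmem hl (by linarith : (0:ℝ) ≤ 1 - t) (le_of_lt htpos) (by ring)
    convert this using 1
    rw [smul_sub, sub_smul, one_smul]; abel
  have hexp : ‖lamk + t • (l - lamk) - z‖ ^ 2 = ‖lamk - z‖ ^ 2 + 2 * (t * d) + t ^ 2 * n := by
    have h4 : lamk + t • (l - lamk) - z = (lamk - z) + t • (l - lamk) := by abel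
    rw [h4, norm_add_sq_real, real_inner_smul_right, norm_smul, mul_pow,
      Real.norm_eq_abs, sq_abs, real_inner_comm]
  have h5 := hmin _ hmem'
  rw [hexp] at h5
  nlinarith

end sGSAux


set_option maxHeartbeats 1000000 in
/-- The sGS decomposition identity for the `(λ, p)`-subproblem of the majorized ABCD
method: with the sGS proximal operator `D₁(λ, p) = ((1/α)(α A² + I)⁻¹ λ, 0)`, the
backward-forward Gauss-Seidel sweep `p̂ → λᵏ → pᵏ` produces the unique minimizer of
the coupled proximal subproblem over `B × H`. -/
theorem sGS_decomposition
    {H : Type*} [NormedAddCommGroup H] [InnerProductSpace ℝ H] [CompleteSpace H]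
    (A : H →L[ℝ] H) (hA : ∀ x y : H, ⟪A x, y⟫_ℝ = ⟪x, A y⟫_ℝ)
    (α : ℝ) (hα : 0 < α) (yd yr c lamt pt : H)
    (B : Set H) (hBne : B.Nonempty) (hBclosed : IsClosed B) (hBconvex : Convex ℝ B)
    -- `T = (α A² + I)⁻¹`
    (T : H →L[ℝ] H)
    (hT1 : ∀ x, T (α • A (A x) + x) = x) (hT2 : ∀ x, α • A (A (T x)) + T x = x)
    (phat lamk pk : H)
    (hphat : ∀ p : H,
      (1 / 2) * ‖A phat - yd‖ ^ 2 + (1 / (2 * α)) * ‖phat - lamt - c‖ ^ 2 + ⟪phat, yr⟫_ℝ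
        ≤ (1 / 2) * ‖A p - yd‖ ^ 2 + (1 / (2 * α)) * ‖p - lamt - c‖ ^ 2 + ⟪p, yr⟫_ℝ)
    (hlamk_mem : lamk ∈ B)
    (hlamk : ∀ l ∈ B,
      (1 / (2 * α)) * ‖lamk - (phat - c)‖ ^ 2 ≤ (1 / (2 * α)) * ‖l - (phat - c)‖ ^ 2)
    (hpk : ∀ p : H,
      (1 / 2) * ‖A pk - yd‖ ^ 2 + (1 / (2 * α)) * ‖pk - lamk - c‖ ^ 2 + ⟪pk, yr⟫_ℝ
        ≤ (1 / 2) * ‖A p - yd‖ ^ 2 + (1 / (2 * α)) * ‖p - lamk - c‖ ^ 2 + ⟪p, yr⟫_ℝ) :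
    (∀ l ∈ B, ∀ p : H,
      (1 / 2) * ‖A pk - yd‖ ^ 2 + ⟪pk, yr⟫_ℝ + (1 / (2 * α)) * ‖-pk + lamk + c‖ ^ 2
          + (1 / 2) * prodInner (lamk - lamt, pk - pt)
              ((1 / α) • T (lamk - lamt), (0 : H))
        ≤ (1 / 2) * ‖A p - yd‖ ^ 2 + ⟪p, yr⟫_ℝ + (1 / (2 * α)) * ‖-p + l + c‖ ^ 2
          + (1 / 2) * prodInner (l - lamt, p - pt) ((1 / α) • T (l - lamt), (0 : H))) ∧
    (∀ l' ∈ B, ∀ p' : H,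
      (∀ l ∈ B, ∀ p : H,
        (1 / 2) * ‖A p' - yd‖ ^ 2 + ⟪p', yr⟫_ℝ + (1 / (2 * α)) * ‖-p' + l' + c‖ ^ 2
            + (1 / 2) * prodInner (l' - lamt, p' - pt) ((1 / α) • T (l' - lamt), (0 : H))
          ≤ (1 / 2) * ‖A p - yd‖ ^ 2 + ⟪p, yr⟫_ℝ + (1 / (2 * α)) * ‖-p + l + c‖ ^ 2
            + (1 / 2) * prodInner (l - lamt, p - pt) ((1 / α) • T (l - lamt), (0 : H))) →
      l' = lamk ∧ p' = pk) := by
  have hane : α ≠ 0 := ne_of_gt hα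
  have hpos : (0:ℝ) < 1 / (2 * α) := by positivity
  -- first-order conditions for the two inner problems
  have hE1 : α • A (A phat) + phat = α • A yd - α • yr + (lamt + c) :=
    sGS_foc_aux A hA α hα yd yr lamt c phat hphat
  have hE2 : α • A (A pk) + pk = α • A yd - α • yr + (lamk + c) :=
    sGS_foc_aux A hA α hα yd yr lamk c pk hpk
  -- the sGS relation `pk - phat = T (lamk - lamt)`
  have hK : pk - phat = T (lamk - lamt) := by
    have harg : α • A (A (pk - phat)) + (pk - phat) = lamk - lamt := by
      rw [map_sub, map_sub]
      linear_combination (norm := module) hE2 - hE1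
    rw [← harg, hT1]
  -- self-adjointness of T
  have hTsym : ∀ x y : H, ⟪T x, y⟫_ℝ = ⟪x, T y⟫_ℝ := by
    intro x y
    calc ⟪T x, y⟫_ℝ = ⟪T x, α • A (A (T y)) + T y⟫_ℝ := by rw [hT2]
      _ = α * ⟪A (A (T x)), T y⟫_ℝ + ⟪T x, T y⟫_ℝ := by
          rw [inner_add_right, real_inner_smul_right, ← hA, ← hA]
      _ = ⟪α • A (A (T x)) + T x, T y⟫_ℝ := by
          rw [inner_add_left, real_inner_smul_left]
      _ = ⟪x, T y⟫_ℝ := by rw [hT2]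
  -- variational inequality for the projection step
  have hVI : ∀ l ∈ B, 0 ≤ ⟪l - lamk, lamk - (phat - c)⟫_ℝ := by
    refine sGS_vi_aux B hBconvex (phat - c) lamk hlamk_mem (fun l hl => ?_)
    exact (mul_le_mul_iff_right₀ hpos).mp (hlamk l hl)
  -- expansion of the distance to `phat - c`
  have hDgen : ∀ v : H, ‖v - (phat - c)‖ ^ 2
      = ‖lamk - (phat - c)‖ ^ 2 + 2 * ⟪v - lamk, lamk - (phat - c)⟫_ℝ + ‖v - lamk‖ ^ 2 := by
    intro v
    have h1 : v - (phat - c) = (lamk - (phat - c)) + (v - lamk) := by abel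
    rw [h1, norm_add_sq_real, real_inner_comm]
  -- conversion of the objective to the denominator-free form
  have hconv : ∀ l p : H,
      1 / 2 * ‖A p - yd‖ ^ 2 + ⟪p, yr⟫_ℝ + 1 / (2 * α) * ‖-p + l + c‖ ^ 2
        + 1 / 2 * prodInner (l - lamt, p - pt) ((1 / α) • T (l - lamt), (0 : H))
      = 1 / (2 * α) * (α * ‖A p - yd‖ ^ 2 + ‖p - l - c‖ ^ 2 + 2 * α * ⟪p, yr⟫_ℝ
          + ⟪l - lamt, T (l - lamt)⟫_ℝ) := by
    intro l p
    have h1 : ‖-p + l + c‖ = ‖p - l - c‖ := by rw [← norm_neg]; congr 1; abel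
    simp only [prodInner, real_inner_smul_right, inner_zero_right, add_zero]
    rw [h1]
    field_simp
    ring
  -- the master identity
  have key : ∀ l p : H,
      α * ‖A p - yd‖ ^ 2 + ‖p - l - c‖ ^ 2 + 2 * α * ⟪p, yr⟫_ℝ
          + ⟪l - lamt, T (l - lamt)⟫_ℝ
        = (α * ‖A pk - yd‖ ^ 2 + ‖pk - lamk - c‖ ^ 2 + 2 * α * ⟪pk, yr⟫_ℝ
            + ⟪lamk - lamt, T (lamk - lamt)⟫_ℝ)
          + α * ‖A (p - (pk + T (l - lamk)))‖ ^ 2 + ‖p - (pk + T (l - lamk))‖ ^ 2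
          + ‖l - (phat - c)‖ ^ 2 - ‖lamk - (phat - c)‖ ^ 2 := by
    intro l p
    -- first-order condition for the point `pk + T (l - lamk)`
    have hfoc0 : α • A (A (pk + T (l - lamk))) - α • A yd + α • yr
        + ((pk + T (l - lamk)) - l - c) = (0:H) := by
      have h2 := hT2 (l - lamk)
      rw [map_add, map_add]
      linear_combination (norm := module) hE2 + h2
    have hexp := sGS_expand_mul A hA α yd yr l c (pk + T (l - lamk)) p
    rw [hfoc0, inner_zero_right, mul_zero, add_zero] at hexp
    have hqyr : ⟪pk + T (l - lamk), yr⟫_ℝ = ⟪pk, yr⟫_ℝ + ⟪T (l - lamk), yr⟫_ℝ :=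
      inner_add_left _ _ _
    have hA1 : ‖A (pk + T (l - lamk)) - yd‖ ^ 2
        = ‖A pk - yd‖ ^ 2 + 2 * ⟪T (l - lamk), A (A pk) - A yd⟫_ℝ
          + ‖A (T (l - lamk))‖ ^ 2 := by
      have h1 : A (pk + T (l - lamk)) - yd = (A pk - yd) + A (T (l - lamk)) := by
        rw [map_add]; abel
      have h2 : ⟪A pk - yd, A (T (l - lamk))⟫_ℝ = ⟪T (l - lamk), A (A pk) - A yd⟫_ℝ := by
        rw [real_inner_comm, hA, map_sub A (A pk) yd]
      rw [h1, norm_add_sq_real, h2]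
    have hB1 : ‖(pk + T (l - lamk)) - l - c‖ ^ 2
        = ‖pk - lamk - c‖ ^ 2
          + 2 * (⟪T (l - lamk), pk - lamk - c⟫_ℝ - ⟪l - lamk, pk - lamk - c⟫_ℝ)
          + ‖T (l - lamk) - (l - lamk)‖ ^ 2 := by
      have h1 : (pk + T (l - lamk)) - l - c
          = (pk - lamk - c) + (T (l - lamk) - (l - lamk)) := by abel
      rw [h1, norm_add_sq_real, real_inner_comm, inner_sub_left]
    have hC1 : ⟪l - lamt, T (l - lamt)⟫_ℝ
        = ⟪lamk - lamt, T (lamk - lamt)⟫_ℝ + 2 * ⟪l - lamk, T (lamk - lamt)⟫_ℝ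
          + ⟪l - lamk, T (l - lamk)⟫_ℝ := by
      have h1 : l - lamt = (lamk - lamt) + (l - lamk) := by abel
      have h2 : ⟪lamk - lamt, T (l - lamk)⟫_ℝ = ⟪l - lamk, T (lamk - lamt)⟫_ℝ := by
        rw [← hTsym, real_inner_comm]
      rw [h1, map_add, inner_add_left, inner_add_right, inner_add_right, h2]
      ring
    have hX6 : ‖T (l - lamk) - (l - lamk)‖ ^ 2
        = ‖T (l - lamk)‖ ^ 2 - 2 * ⟪T (l - lamk), l - lamk⟫_ℝ + ‖l - lamk‖ ^ 2 := by
      rw [norm_sub_sq_real]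
    have hE' : α * ‖A (T (l - lamk))‖ ^ 2
        = ⟪T (l - lamk), l - lamk⟫_ℝ - ‖T (l - lamk)‖ ^ 2 := by
      have h1 := congrArg (fun z : H => ⟪T (l - lamk), z⟫_ℝ) (hT2 (l - lamk))
      simp only [inner_add_right, real_inner_smul_right] at h1
      have h2 : ⟪T (l - lamk), A (A (T (l - lamk)))⟫_ℝ = ‖A (T (l - lamk))‖ ^ 2 := by
        rw [← hA, real_inner_self_eq_norm_sq]
      rw [h2, real_inner_self_eq_norm_sq] at h1
      linarith
    have hF' : α * ⟪T (l - lamk), A (A pk) - A yd⟫_ℝ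
        = -(α * ⟪T (l - lamk), yr⟫_ℝ) - ⟪T (l - lamk), pk - lamk - c⟫_ℝ := by
      have h1 := congrArg (fun z : H => ⟪T (l - lamk), z⟫_ℝ) hE2
      simp only [inner_add_right, inner_sub_right, real_inner_smul_right] at h1
      simp only [inner_sub_right]
      linarith
    have hG' : ⟪l - lamk, T (lamk - lamt)⟫_ℝ = ⟪l - lamk, pk⟫_ℝ - ⟪l - lamk, phat⟫_ℝ := by
      rw [← hK, inner_sub_right]
    have hX7 : ⟪l - lamk, lamk - (phat - c)⟫_ℝ
        = (⟪l - lamk, pk⟫_ℝ - ⟪l - lamk, phat⟫_ℝ) - ⟪l - lamk, pk - lamk - c⟫_ℝ := by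
      have h1 : lamk - (phat - c) = (pk - phat) - (pk - lamk - c) := by abel
      rw [h1, inner_sub_right, inner_sub_right]
    have hX8 : ⟪l - lamk, T (l - lamk)⟫_ℝ = ⟪T (l - lamk), l - lamk⟫_ℝ :=
      real_inner_comm _ _
    have hD1 := hDgen l
    linear_combination hexp + α * hA1 + hB1 + hC1 + 2 * α * hqyr + hE' + 2 * hF'
      + 2 * hG' + hX8 - 2 * hX7 + hX6 - hD1
  -- Part 1: minimality
  have part1 : ∀ l ∈ B, ∀ p : H,
      1 / 2 * ‖A pk - yd‖ ^ 2 + ⟪pk, yr⟫_ℝ + 1 / (2 * α) * ‖-pk + lamk + c‖ ^ 2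
          + 1 / 2 * prodInner (lamk - lamt, pk - pt) ((1 / α) • T (lamk - lamt), (0 : H))
        ≤ 1 / 2 * ‖A p - yd‖ ^ 2 + ⟪p, yr⟫_ℝ + 1 / (2 * α) * ‖-p + l + c‖ ^ 2
          + 1 / 2 * prodInner (l - lamt, p - pt) ((1 / α) • T (l - lamt), (0 : H)) := by
    intro l hl p
    rw [hconv lamk pk, hconv l p]
    refine mul_le_mul_of_nonneg_left ?_ (le_of_lt hpos)
    rw [key l p]
    have h1 := hDgen l
    have h2 := hVI l hl
    nlinarith [mul_nonneg (le_of_lt hα) (sq_nonneg ‖A (p - (pk + T (l - lamk)))‖),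
      sq_nonneg ‖p - (pk + T (l - lamk))‖, sq_nonneg ‖l - lamk‖]
  refine ⟨part1, ?_⟩
  -- Part 2: uniqueness
  intro l' hl' p' hmin'
  have h1 := hmin' lamk hlamk_mem pk
  have h2 := part1 l' hl' p'
  have heq := le_antisymm h1 h2
  rw [hconv lamk pk, hconv l' p', key l' p'] at heq
  have hM := mul_left_cancel₀ (ne_of_gt hpos) heq
  have hD := hDgen l'
  have hV := hVI l' hl'
  have hl'eq : l' = lamk := by
    have hsq : ‖l' - lamk‖ ^ 2 ≤ 0 := by
      nlinarith [mul_nonneg (le_of_lt hα) (sq_nonneg ‖A (p' - (pk + T (l' - lamk)))‖),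
        sq_nonneg ‖p' - (pk + T (l' - lamk))‖]
    have h0 : ‖l' - lamk‖ = 0 := by nlinarith [norm_nonneg (l' - lamk)]
    have := norm_eq_zero.mp h0
    exact sub_eq_zero.mp this
  subst hl'eq
  refine ⟨rfl, ?_⟩
  rw [sub_self, map_zero, add_zero] at hM
  have hsq : ‖p' - pk‖ ^ 2 ≤ 0 := by
    nlinarith [mul_nonneg (le_of_lt hα) (sq_nonneg ‖A (p' - pk)‖)]
  have h0 : ‖p' - pk‖ = 0 := by nlinarith [norm_nonneg (p' - pk)]
  exact sub_eq_zero.mp (norm_eq_zero.mp h0)
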